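/- Fix 0 < τ < 1 and 1 < r < p < ∞. Let (n_k)_{k≥1} be a strictly increasing sequence of positive integers with n₁ = 1 and with the gaps n_{k+1} − n_k nondecreasing and tending to infinity; define ρ(i) = 0 if i = n_k for some k and ρ(i) = 1 otherwise, and let M := M_ρ. Let C_{M,1} denote the closed convex hull in the Banach space C([0,1]) of the closure of the set of functions { t ↦ M(λt)/M(λ) : 0 < λ < 1 }. Then for every N ∈ C_{M,1}, either (i) there exists a constant C ≥ 1 such that (1/C)·M(t) ≤ N(t) ≤ C·M(t) for all t ∈ (0,1] (i.e., N is equivalent to M), or (ii) τ^{2p}·t^p ≤ N(t) ≤ τ^{−3p}·t^p for all t ∈ (0,1] (i.e., N is equivalent to t^p with uniform constants). -/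

import Mathlib

open Finset Set

namespace Stmt11

noncomputable def Fe (r p : ℝ) (ρ : ℕ → ℝ) (k : ℕ) : ℝ :=
  r * k + (p - r) * ∑ n ∈ Finset.Icc 1 k, ρ n

noncomputable def zc (ρ : ℕ → ℝ) (a b : ℕ) : ℕ :=
  ((Finset.Icc (a+1) b).filter (fun i => ρ i = 0)).card

variable {τ r p : ℝ} {ρ : ℕ → ℝ}

lemma Fe_zero : Fe r p ρ 0 = 0 := by simp [Fe]

lemma Fe_succ (k : ℕ) : Fe r p ρ (k+1) = Fe r p ρ k + (r + (p - r) * ρ (k+1)) := by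
  simp only [Fe, Finset.sum_Icc_succ_top (by omega : 1 ≤ k+1)]
  push_cast; ring

lemma Fe_win (hρ : ∀ n, 1 ≤ n → ρ n = 0 ∨ ρ n = 1) (m k : ℕ) :
    Fe r p ρ (m+k) = Fe r p ρ m + p * k - (p - r) * zc ρ m (m+k) := by
  induction k with
  | zero => simp [zc]
  | succ k ih =>
    have hIcc : Finset.Icc (m+1) (m+(k+1)) = insert (m+k+1) (Finset.Icc (m+1) (m+k)) := by
      rw [show m+(k+1) = (m+k)+1 by ring, ← Finset.insert_Icc_right_eq_Icc_add_one (by omega)]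
    have hnm : (m+k+1) ∉ Finset.Icc (m+1) (m+k) := by simp
    have hstep : Fe r p ρ (m+(k+1)) = Fe r p ρ (m+k) + (r + (p-r) * ρ (m+k+1)) := by
      rw [show m+(k+1) = (m+k)+1 by ring, Fe_succ]
    rcases hρ (m+k+1) (by omega) with h0 | h1
    · have hz : zc ρ m (m+(k+1)) = zc ρ m (m+k) + 1 := by
        simp only [zc, hIcc, Finset.filter_insert, if_pos h0]
        rw [Finset.card_insert_of_notMem (by simp [Finset.mem_filter, hnm])]
      rw [hstep, ih, hz, h0]; push_cast; ring
    · have hz : zc ρ m (m+(k+1)) = zc ρ m (m+k) := by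
        simp only [zc, hIcc, Finset.filter_insert, if_neg (by rw [h1]; norm_num : ¬ (ρ (m+k+1) = 0))]
      rw [hstep, ih, hz, h1]; push_cast; ring

lemma Fe_succ_le (hρ : ∀ n, 1 ≤ n → ρ n = 0 ∨ ρ n = 1) (hrp : r < p) (k : ℕ) :
    Fe r p ρ (k+1) ≤ Fe r p ρ k + p := by
  rw [Fe_succ]
  rcases hρ (k+1) (by omega) with h | h <;> rw [h] <;> nlinarith

lemma Fe_succ_ge (hρ : ∀ n, 1 ≤ n → ρ n = 0 ∨ ρ n = 1) (hrp : r < p) (k : ℕ) :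
    Fe r p ρ k + r ≤ Fe r p ρ (k+1) := by
  rw [Fe_succ]
  rcases hρ (k+1) (by omega) with h | h <;> rw [h] <;> nlinarith

lemma Fe_add_le (hρ : ∀ n, 1 ≤ n → ρ n = 0 ∨ ρ n = 1) (hrp : r < p) (m k : ℕ) :
    Fe r p ρ (m+k) ≤ Fe r p ρ m + p * k := by
  induction k with
  | zero => simp
  | succ k ih =>
    have := Fe_succ_le hρ hrp (m+k)
    rw [show m+(k+1) = (m+k)+1 by ring]
    push_cast; push_cast at ih; linarith

lemma Fe_add_ge (hρ : ∀ n, 1 ≤ n → ρ n = 0 ∨ ρ n = 1) (hrp : r < p) (m k : ℕ) :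
    Fe r p ρ m + r * k ≤ Fe r p ρ (m+k) := by
  induction k with
  | zero => simp
  | succ k ih =>
    have := Fe_succ_ge hρ hrp (m+k)
    rw [show m+(k+1) = (m+k)+1 by ring]
    push_cast; push_cast at ih; linarith

lemma Fe_mono (hρ : ∀ n, 1 ≤ n → ρ n = 0 ∨ ρ n = 1) (hr : 1 < r) (hrp : r < p)
    {a b : ℕ} (hab : a ≤ b) : Fe r p ρ a ≤ Fe r p ρ b := by
  obtain ⟨k, rfl⟩ := Nat.exists_eq_add_of_le hab
  have := Fe_add_ge hρ hrp a k
  nlinarith [Nat.cast_nonneg (α := ℝ) k]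

lemma Fe_nonneg (hρ : ∀ n, 1 ≤ n → ρ n = 0 ∨ ρ n = 1) (hr : 1 < r) (hrp : r < p)
    (k : ℕ) : 0 ≤ Fe r p ρ k := by
  have := Fe_mono hρ hr hrp (Nat.zero_le k)
  rw [Fe_zero] at this; exact this

/-- trivial upper bound via `Fe μ ≥ r μ`. -/
lemma Fe_add_le' (hρ : ∀ n, 1 ≤ n → ρ n = 0 ∨ ρ n = 1) (hrp : r < p) (μ k : ℕ) :
    Fe r p ρ (μ+k) ≤ Fe r p ρ μ + (p - r) * μ + Fe r p ρ k := by
  have h1 : Fe r p ρ (k+μ) ≤ Fe r p ρ k + p * μ := Fe_add_le hρ hrp k μ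
  have h2 : Fe r p ρ 0 + r * μ ≤ Fe r p ρ (0+μ) := Fe_add_ge hρ hrp 0 μ
  rw [Fe_zero] at h2
  simp only [Nat.zero_add] at h2
  rw [show μ+k = k+μ by ring]
  linarith

end Stmt11

section Part2

variable {τ r p : ℝ} {ρ : ℕ → ℝ} {nk : ℕ → ℕ}

lemma nk_lt (hmono : ∀ k : ℕ, 1 ≤ k → nk k < nk (k + 1))
    {a b : ℕ} (ha : 1 ≤ a) (hab : a < b) : nk a < nk b := by
  induction b with
  | zero => omega
  | succ b ih =>
    rcases Nat.lt_succ_iff_lt_or_eq.mp hab with h | h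
    · exact lt_trans (ih h) (hmono b (by omega))
    · subst h; exact hmono a ha

lemma nk_le (hmono : ∀ k : ℕ, 1 ≤ k → nk k < nk (k + 1))
    {a b : ℕ} (ha : 1 ≤ a) (hab : a ≤ b) : nk a ≤ nk b := by
  rcases eq_or_lt_of_le hab with h | h
  · subst h; exact le_rfl
  · exact (nk_lt hmono ha h).le

lemma nk_ge_one (hnk1 : nk 1 = 1) (hmono : ∀ k : ℕ, 1 ≤ k → nk k < nk (k + 1))
    {a : ℕ} (ha : 1 ≤ a) : 1 ≤ nk a := by
  have := nk_le hmono le_rfl ha; omega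

/-- gap monotonicity in ℤ -/
lemma gapZ_mono (hmono : ∀ k : ℕ, 1 ≤ k → nk k < nk (k + 1))
    (hgap : ∀ k : ℕ, 1 ≤ k → nk (k + 1) - nk k ≤ nk (k + 2) - nk (k + 1))
    {a b : ℕ} (ha : 1 ≤ a) (hab : a ≤ b) :
    (nk (a+1) : ℤ) - nk a ≤ (nk (b+1) : ℤ) - nk b := by
  induction b with
  | zero => omega
  | succ b ih =>
    rcases Nat.lt_succ_iff_lt_or_eq.mp (Nat.lt_succ_of_le hab) with h | h
    · have h1 : (nk (b+1) : ℤ) - nk b ≤ (nk (b+2) : ℤ) - nk (b+1) := by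
        have hb1 : 1 ≤ b := by omega
        have := hgap b hb1
        have e1 := (hmono b hb1).le
        have e2 := (hmono (b+1) (by omega)).le
        have e3 : nk (b+2) = nk (b+1+1) := rfl
        omega
      exact le_trans (ih (by omega)) h1
    · subst h; rfl

/-- the chunk of `nk` starting at `a` grows at least as fast as from `1`. -/
lemma nk_shift (hmono : ∀ k : ℕ, 1 ≤ k → nk k < nk (k + 1))
    (hgap : ∀ k : ℕ, 1 ≤ k → nk (k + 1) - nk k ≤ nk (k + 2) - nk (k + 1))
    {a : ℕ} (ha : 1 ≤ a) (d : ℕ) :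
    (nk (1+d) : ℤ) - nk 1 ≤ (nk (a+d) : ℤ) - nk a := by
  induction d with
  | zero => simp
  | succ d ih =>
    have := gapZ_mono hmono hgap (show 1 ≤ 1+d by omega) (show 1+d ≤ a+d by omega)
    have e1 : (1+(d+1)) = (1+d)+1 := by ring
    have e2 : (a+(d+1)) = (a+d)+1 := by ring
    rw [e1, e2]; push_cast at *; omega

/-- zeros of `ρ` are values of `nk`. -/
lemma zero_is_nk (hρ1 : ∀ i : ℕ, (∀ k : ℕ, 1 ≤ k → nk k ≠ i) → ρ i = 1)
    {i : ℕ} (hi : ρ i = 0) : ∃ j, 1 ≤ j ∧ nk j = i := by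
  by_contra h
  push_neg at h
  have := hρ1 i (fun k hk => h k hk)
  rw [hi] at this; norm_num at this

/-- Key counting lemma: a window of length `k` contains at most as many zeros as `[1,k]`. -/
lemma zc_window_le (hnk1 : nk 1 = 1)
    (hmono : ∀ k : ℕ, 1 ≤ k → nk k < nk (k + 1))
    (hgap : ∀ k : ℕ, 1 ≤ k → nk (k + 1) - nk k ≤ nk (k + 2) - nk (k + 1))
    (hρ0 : ∀ k : ℕ, 1 ≤ k → ρ (nk k) = 0)
    (hρ1 : ∀ i : ℕ, (∀ k : ℕ, 1 ≤ k → nk k ≠ i) → ρ i = 1)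
    (μ k : ℕ) : Stmt11.zc ρ μ (μ+k) ≤ Stmt11.zc ρ 0 k := by
  classical
  unfold Stmt11.zc
  set A := (Finset.Icc (μ+1) (μ+k)).filter (fun i => ρ i = 0) with hA
  rcases Finset.eq_empty_or_nonempty A with hAe | hAne
  · rw [hAe]; simp
  · set i₀ := A.min' hAne with hi₀def
    have hi₀A : i₀ ∈ A := A.min'_mem hAne
    -- index function
    have hex : ∀ i ∈ A, ∃ j, 1 ≤ j ∧ nk j = i := by
      intro i hi
      exact zero_is_nk hρ1 (Finset.mem_filter.mp hi).2
    choose! jf hjf1 hjf2 using hex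
    have hj₀ := hjf1 i₀ hi₀A
    have hj₀v := hjf2 i₀ hi₀A
    have hjge : ∀ i ∈ A, jf i₀ ≤ jf i := by
      intro i hi
      by_contra hlt
      push_neg at hlt
      have : nk (jf i) < nk (jf i₀) := nk_lt hmono (hjf1 i hi) hlt
      rw [hjf2 i hi, hj₀v] at this
      exact absurd (A.min'_le i hi) (by omega)
    have hbound : ∀ i ∈ A, i ≤ μ + k ∧ μ + 1 ≤ i := by
      intro i hi
      rw [hA, Finset.mem_filter, Finset.mem_Icc] at hi
      omega
    apply Finset.card_le_card_of_injOn (fun i => nk (1 + (jf i - jf i₀)))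
    · intro i hi
      have h1 : 1 ≤ 1 + (jf i - jf i₀) := by omega
      rw [Finset.mem_coe, Finset.mem_filter, Finset.mem_Icc]
      refine ⟨⟨nk_ge_one hnk1 hmono h1, ?_⟩, hρ0 _ h1⟩
      -- nk (1+d) ≤ k
      have hs := nk_shift hmono hgap hj₀ (jf i - jf i₀)
      have he : jf i₀ + (jf i - jf i₀) = jf i := by
        have := hjge i hi; omega
      rw [he, hjf2 i hi, hj₀v, hnk1] at hs
      have hb := hbound i hi
      have hb₀ := hbound i₀ hi₀A
      beta_reduce
      omega
    · intro i hi i' hi' heq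
      simp only at heq
      have h1 : 1 ≤ 1 + (jf i - jf i₀) := by omega
      have h1' : 1 ≤ 1 + (jf i' - jf i₀) := by omega
      have hjeq : 1 + (jf i - jf i₀) = 1 + (jf i' - jf i₀) := by
        by_contra hne
        rcases Nat.lt_or_ge (1 + (jf i - jf i₀)) (1 + (jf i' - jf i₀)) with h | h
        · exact absurd heq (by have := nk_lt hmono h1 h; omega)
        · have h' : 1 + (jf i' - jf i₀) < 1 + (jf i - jf i₀) := by omega
          exact absurd heq (by have := nk_lt hmono h1' h'; omega)
      have hgi := hjge i hi
      have hgi' := hjge i' hi'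
      have : jf i = jf i' := by omega
      calc i = nk (jf i) := (hjf2 i hi).symm
        _ = nk (jf i') := by rw [this]
        _ = i' := hjf2 i' hi'

/-- In a "deep" window (beyond `nk J₀` where all gaps exceed `k₁+2`) there is at most one zero. -/
lemma zc_deep (hnk1 : nk 1 = 1)
    (hmono : ∀ k : ℕ, 1 ≤ k → nk k < nk (k + 1))
    (hρ1 : ∀ i : ℕ, (∀ k : ℕ, 1 ≤ k → nk k ≠ i) → ρ i = 1)
    {J₀ k₁ m : ℕ} (hJ1 : 1 ≤ J₀)
    (hJ : ∀ j, J₀ ≤ j → nk j + (k₁ + 3) ≤ nk (j+1))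
    (hm : nk J₀ + 1 ≤ m) :
    Stmt11.zc ρ (m+1) (m+k₁) ≤ 1 := by
  classical
  unfold Stmt11.zc
  rw [Finset.card_le_one]
  intro i hi i' hi'
  rw [Finset.mem_filter, Finset.mem_Icc] at hi hi'
  obtain ⟨j, hj1, hjv⟩ := zero_is_nk hρ1 hi.2
  obtain ⟨j', hj1', hjv'⟩ := zero_is_nk hρ1 hi'.2
  have hkey : ∀ a b : ℕ, 1 ≤ a → 1 ≤ b → a < b →
      m + 2 ≤ nk a → nk b ≤ m + k₁ → False := by
    intro a b ha hb hab hA hB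
    have haJ : J₀ ≤ a := by
      by_contra hc
      push_neg at hc
      have : nk a ≤ nk J₀ := nk_le hmono ha (by omega)
      omega
    have h1 := hJ a haJ
    have h2 : nk (a+1) ≤ nk b := nk_le hmono (by omega) (by omega)
    omega
  rcases lt_trichotomy j j' with h | h | h
  · exact absurd (hkey j j' hj1 hj1' h (by omega) (by omega)) (by simp)
  · rw [← hjv, ← hjv', h]
  · exact absurd (hkey j' j hj1' hj1 h (by omega) (by omega)) (by simp)

end Part2

open Finset in
/-- `M` is the Orlicz function `M_η` of Lindenstrauss–Tzafriri associated to
`0 < τ < 1`, `1 < r < p < ∞` and a 0-1 sequence `η`: the continuous piecewise-linear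
function on `[0,1]` with `M 0 = 0`, `M (τ^k) = τ^(rk + (p-r)·Σ_{n=1}^k η n)` for
`k ≥ 0` (in particular `M 1 = 1`), affine on each interval `[τ^(k+1), τ^k]`. -/
def IsMeta (τ r p : ℝ) (η : ℕ → ℝ) (M : ℝ → ℝ) : Prop :=
  M 0 = 0 ∧
  (∀ k : ℕ, M (τ ^ k) = τ ^ (r * (k : ℝ) + (p - r) * ∑ n ∈ Finset.Icc 1 k, η n)) ∧
  (∀ k : ℕ, ∀ x ∈ Set.Icc (τ ^ (k + 1)) (τ ^ k),
    M x = M (τ ^ (k + 1)) +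
      (x - τ ^ (k + 1)) * (M (τ ^ k) - M (τ ^ (k + 1))) / (τ ^ k - τ ^ (k + 1)))


namespace Stmt11

structure Hyp (τ r p : ℝ) (ρ : ℕ → ℝ) (M : ℝ → ℝ) : Prop where
  hτ0 : 0 < τ
  hτ1 : τ < 1
  hr : 1 < r
  hrp : r < p
  hρ : ∀ n, 1 ≤ n → ρ n = 0 ∨ ρ n = 1
  hM : IsMeta τ r p ρ M

variable {τ r p : ℝ} {ρ : ℕ → ℝ} {M : ℝ → ℝ}

lemma Hyp.p1 (H : Hyp τ r p ρ M) : 1 < p := H.hr.trans H.hrp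

lemma Mgrid (H : Hyp τ r p ρ M) (k : ℕ) : M (τ^k) = τ ^ (Fe r p ρ k) := H.hM.2.1 k

lemma Mgrid_pos (H : Hyp τ r p ρ M) (k : ℕ) : 0 < M (τ^k) := by
  rw [Mgrid H]; exact Real.rpow_pos_of_pos H.hτ0 _

lemma Mgrid_mono (H : Hyp τ r p ρ M) {a b : ℕ} (hab : a ≤ b) : M (τ^b) ≤ M (τ^a) := by
  rw [Mgrid H, Mgrid H]
  exact Real.rpow_le_rpow_of_exponent_ge H.hτ0 H.hτ1.le (Fe_mono H.hρ H.hr H.hrp hab)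

lemma powΔ (H : Hyp τ r p ρ M) (k : ℕ) : τ^(k+1) < τ^k :=
  pow_lt_pow_right_of_lt_one₀ H.hτ0 H.hτ1 (by omega)

lemma Mbary (H : Hyp τ r p ρ M) (k : ℕ) {x : ℝ} (h1 : τ^(k+1) ≤ x) (h2 : x ≤ τ^k) :
    M x * (τ^k - τ^(k+1)) = M (τ^(k+1)) * (τ^k - x) + M (τ^k) * (x - τ^(k+1)) := by
  have hΔ : (0:ℝ) < τ^k - τ^(k+1) := by have := powΔ H k; linarith
  rw [H.hM.2.2 k x ⟨h1, h2⟩]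
  field_simp
  ring

lemma M_between (H : Hyp τ r p ρ M) (k : ℕ) {x : ℝ} (h1 : τ^(k+1) ≤ x) (h2 : x ≤ τ^k) :
    M (τ^(k+1)) ≤ M x ∧ M x ≤ M (τ^k) := by
  have hb := Mbary H k h1 h2
  have hΔ : (0:ℝ) < τ^k - τ^(k+1) := by have := powΔ H k; linarith
  have hAB : M (τ^(k+1)) ≤ M (τ^k) := Mgrid_mono H (by omega)
  constructor <;> nlinarith

lemma Kex (H : Hyp τ r p ρ M) {x : ℝ} (h0 : 0 < x) (h1 : x ≤ 1) :
    ∃ k, τ^(k+1) < x ∧ x ≤ τ^k := by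
  have hex : ∃ n, τ^n < x := exists_pow_lt_of_lt_one h0 H.hτ1
  have hn₀ : τ ^ (Nat.find hex) < x := Nat.find_spec hex
  have hne : Nat.find hex ≠ 0 := by
    intro h; rw [h] at hn₀; simp at hn₀; linarith
  refine ⟨Nat.find hex - 1, ?_, ?_⟩
  · have he : Nat.find hex - 1 + 1 = Nat.find hex := by omega
    rw [he]; exact hn₀
  · by_contra hc
    push_neg at hc
    exact Nat.find_min hex (by omega) hc

lemma M_pos (H : Hyp τ r p ρ M) {x : ℝ} (h0 : 0 < x) (h1 : x ≤ 1) : 0 < M x := by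
  obtain ⟨k, hk1, hk2⟩ := Kex H h0 h1
  exact lt_of_lt_of_le (Mgrid_pos H (k+1)) (M_between H k hk1.le hk2).1

lemma M_nonneg (H : Hyp τ r p ρ M) {x : ℝ} (h0 : 0 ≤ x) (h1 : x ≤ 1) : 0 ≤ M x := by
  rcases eq_or_lt_of_le h0 with h | h
  · rw [← h, H.hM.1]
  · exact (M_pos H h h1).le

lemma M_mono (H : Hyp τ r p ρ M) {x y : ℝ} (hx : 0 ≤ x) (hxy : x ≤ y) (hy : y ≤ 1) :
    M x ≤ M y := by
  rcases eq_or_lt_of_le hx with h | hx0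
  · rw [← h, H.hM.1]; exact M_nonneg H (by linarith) hy
  · obtain ⟨kx, hkx1, hkx2⟩ := Kex H hx0 (hxy.trans hy)
    obtain ⟨ky, hky1, hky2⟩ := Kex H (hx0.trans_le hxy) hy
    have hk : ky ≤ kx := by
      by_contra hc
      push_neg at hc
      have : τ^ky ≤ τ^(kx+1) := pow_le_pow_of_le_one H.hτ0.le H.hτ1.le (by omega)
      linarith
    rcases eq_or_lt_of_le hk with h | h
    · subst h
      have hb1 := Mbary H ky hkx1.le hkx2
      have hb2 := Mbary H ky hky1.le hky2
      have hΔ : (0:ℝ) < τ^ky - τ^(ky+1) := by have := powΔ H ky; linarith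
      have hAB : M (τ^(ky+1)) ≤ M (τ^ky) := Mgrid_mono H (by omega)
      nlinarith
    · calc M x ≤ M (τ^kx) := (M_between H kx hkx1.le hkx2).2
        _ ≤ M (τ^(ky+1)) := Mgrid_mono H (by omega)
        _ ≤ M y := (M_between H ky hky1.le hky2).1

/-- master comparison lemma on `[0,1]` from grid values. -/
lemma cmp_le (H : Hyp τ r p ρ M) (φ ψ : ℝ → ℝ)
    (hφ : ∀ k : ℕ, ∀ x, τ^(k+1) ≤ x → x ≤ τ^k →
      φ x * (τ^k - τ^(k+1)) ≤ φ (τ^(k+1)) * (τ^k - x) + φ (τ^k) * (x - τ^(k+1)))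
    (hψ : ∀ k : ℕ, ∀ x, τ^(k+1) ≤ x → x ≤ τ^k →
      ψ (τ^(k+1)) * (τ^k - x) + ψ (τ^k) * (x - τ^(k+1)) ≤ ψ x * (τ^k - τ^(k+1)))
    (h0 : φ 0 ≤ ψ 0) (hg : ∀ k : ℕ, φ (τ^k) ≤ ψ (τ^k)) :
    ∀ x, 0 ≤ x → x ≤ 1 → φ x ≤ ψ x := by
  intro x hx0 hx1
  rcases eq_or_lt_of_le hx0 with h | h
  · rwa [← h]
  · obtain ⟨k, hk1, hk2⟩ := Kex H h hx1
    have hΔ : (0:ℝ) < τ^k - τ^(k+1) := by have := powΔ H k; linarith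
    have e1 := hφ k x hk1.le hk2
    have e2 := hψ k x hk1.le hk2
    have g1 := mul_le_mul_of_nonneg_right (hg (k+1)) (by linarith : (0:ℝ) ≤ τ^k - x)
    have g2 := mul_le_mul_of_nonneg_right (hg k) (by linarith : (0:ℝ) ≤ x - τ^(k+1))
    have : φ x * (τ^k - τ^(k+1)) ≤ ψ x * (τ^k - τ^(k+1)) := by linarith
    exact le_of_mul_le_mul_right this hΔ

lemma rpow_chord (hp : 1 ≤ p) {u v x : ℝ} (hu : 0 ≤ u) (hx1 : u ≤ x) (hx2 : x ≤ v) :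
    x^p * (v - u) ≤ u^p * (v - x) + v^p * (x - u) := by
  rcases eq_or_lt_of_le (hx1.trans hx2) with h | huv
  · have hxu : x = u := le_antisymm (h ▸ hx2) hx1
    have : x ^ p * (v - u) = u ^ p * (v - x) + v ^ p * (x - u) := by rw [← h, hxu]; ring
    linarith
  · have hvu : (0:ℝ) < v - u := by linarith
    have ha : (0:ℝ) ≤ (v - x)/(v - u) := div_nonneg (by linarith) hvu.le
    have hb : (0:ℝ) ≤ (x - u)/(v - u) := div_nonneg (by linarith) hvu.le
    have hab : (v - x)/(v - u) + (x - u)/(v - u) = 1 := by field_simp; ring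
    have hkey := (convexOn_rpow hp).2 (Set.mem_Ici.mpr hu)
      (Set.mem_Ici.mpr (by linarith : (0:ℝ) ≤ v)) ha hb hab
    rw [smul_eq_mul, smul_eq_mul, smul_eq_mul, smul_eq_mul] at hkey
    have hx : (v - x)/(v - u) * u + (x - u)/(v - u) * v = x := by field_simp; ring
    rw [hx] at hkey
    have := mul_le_mul_of_nonneg_right hkey hvu.le
    calc x^p * (v - u) ≤ ((v - x)/(v - u) * u^p + (x - u)/(v - u) * v^p) * (v - u) := this
      _ = u^p * (v - x) + v^p * (x - u) := by field_simp

lemma Mbary_shift (H : Hyp τ r p ρ M) (μ k : ℕ) {x : ℝ}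
    (h1 : τ^(k+1) ≤ x) (h2 : x ≤ τ^k) :
    M (τ^μ * x) * (τ^k - τ^(k+1)) =
      M (τ^(μ+k+1)) * (τ^k - x) + M (τ^(μ+k)) * (x - τ^(k+1)) := by
  have hτμ : (0:ℝ) < τ^μ := pow_pos H.hτ0 μ
  have e1 : τ^(μ+k) = τ^μ * τ^k := pow_add τ μ k
  have e2 : τ^(μ+k+1) = τ^μ * τ^(k+1) := by rw [show μ+k+1 = μ+(k+1) from rfl, pow_add]
  have hb := Mbary H (μ+k) (x := τ^μ * x)
    (by rw [e2]; exact mul_le_mul_of_nonneg_left h1 hτμ.le)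
    (by rw [e1]; exact mul_le_mul_of_nonneg_left h2 hτμ.le)
  rw [e1, e2] at hb
  rw [e2, e1]
  apply mul_left_cancel₀ (ne_of_gt hτμ)
  linear_combination hb

end Stmt11

namespace Stmt11

variable {τ r p : ℝ} {ρ : ℕ → ℝ} {M : ℝ → ℝ} {nk : ℕ → ℕ}

lemma P1 (H : Hyp τ r p ρ M) (μ : ℕ) :
    ∀ x, 0 ≤ x → x ≤ 1 → τ ^ (Fe r p ρ μ) * x ^ p ≤ M (τ^μ * x) := by
  have hc : (0:ℝ) ≤ τ ^ (Fe r p ρ μ) := (Real.rpow_pos_of_pos H.hτ0 _).le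
  apply cmp_le H
  · intro k x h1 h2
    have hch := rpow_chord H.p1.le (pow_nonneg H.hτ0.le (k+1)) h1 h2
    nlinarith [mul_le_mul_of_nonneg_left hch hc]
  · intro k x h1 h2
    rw [← pow_add τ μ (k+1), ← pow_add τ μ k, show μ+(k+1) = μ+k+1 from rfl]
    exact le_of_eq (Mbary_shift H μ k h1 h2).symm
  · rw [Real.zero_rpow (by nlinarith [H.p1] : p ≠ 0), mul_zero, mul_zero, H.hM.1]
  · intro k
    rw [← pow_add, Mgrid H]
    have e1 : ((τ:ℝ)^k) ^ p = τ ^ ((k:ℝ) * p) := by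
      rw [← Real.rpow_natCast τ k, ← Real.rpow_mul H.hτ0.le]
    rw [e1, ← Real.rpow_add H.hτ0]
    apply Real.rpow_le_rpow_of_exponent_ge H.hτ0 H.hτ1.le
    have := Fe_add_le H.hρ H.hrp μ k
    linarith [this, (by ring : p * (k:ℝ) = (k:ℝ) * p)]

lemma FI2 (H : Hyp τ r p ρ M) (hnk1 : nk 1 = 1)
    (hmono : ∀ k : ℕ, 1 ≤ k → nk k < nk (k + 1))
    (hgap : ∀ k : ℕ, 1 ≤ k → nk (k + 1) - nk k ≤ nk (k + 2) - nk (k + 1))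
    (hρ0 : ∀ k : ℕ, 1 ≤ k → ρ (nk k) = 0)
    (hρ1 : ∀ i : ℕ, (∀ k : ℕ, 1 ≤ k → nk k ≠ i) → ρ i = 1)
    (μ k : ℕ) : Fe r p ρ μ + Fe r p ρ k - (p - r) ≤ Fe r p ρ (μ+k) := by
  have h1 := Fe_win (r := r) (p := p) H.hρ μ k
  have h2 := Fe_win (r := r) (p := p) H.hρ 0 k
  rw [Fe_zero] at h2
  simp only [Nat.zero_add] at h2
  have h3 := zc_window_le hnk1 hmono hgap hρ0 hρ1 μ k
  have h4 : ((zc ρ μ (μ+k) : ℝ)) ≤ (zc ρ 0 k : ℝ) := Nat.cast_le.mpr h3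
  have hpr : 0 < p - r := by linarith [H.hrp]
  nlinarith

lemma P2 (H : Hyp τ r p ρ M) (hnk1 : nk 1 = 1)
    (hmono : ∀ k : ℕ, 1 ≤ k → nk k < nk (k + 1))
    (hgap : ∀ k : ℕ, 1 ≤ k → nk (k + 1) - nk k ≤ nk (k + 2) - nk (k + 1))
    (hρ0 : ∀ k : ℕ, 1 ≤ k → ρ (nk k) = 0)
    (hρ1 : ∀ i : ℕ, (∀ k : ℕ, 1 ≤ k → nk k ≠ i) → ρ i = 1)
    (μ : ℕ) :
    ∀ x, 0 ≤ x → x ≤ 1 → M (τ^μ * x) ≤ τ ^ (Fe r p ρ μ - (p - r)) * M x := by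
  apply cmp_le H
  · intro k x h1 h2
    rw [← pow_add τ μ (k+1), ← pow_add τ μ k, show μ+(k+1) = μ+k+1 from rfl]
    exact le_of_eq (Mbary_shift H μ k h1 h2)
  · intro k x h1 h2
    have := Mbary H k h1 h2
    linear_combination (τ ^ (Fe r p ρ μ - (p - r))) * this.symm
  · rw [mul_zero, H.hM.1, mul_zero]
  · intro k
    rw [← pow_add, Mgrid H, Mgrid H, ← Real.rpow_add H.hτ0]
    apply Real.rpow_le_rpow_of_exponent_ge H.hτ0 H.hτ1.le
    have := FI2 H hnk1 hmono hgap hρ0 hρ1 μ k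
    linarith

lemma P3 (H : Hyp τ r p ρ M) (μ : ℕ) :
    ∀ x, 0 ≤ x → x ≤ 1 → τ ^ (Fe r p ρ μ + (p - r) * μ) * M x ≤ M (τ^μ * x) := by
  apply cmp_le H
  · intro k x h1 h2
    have := Mbary H k h1 h2
    linear_combination (τ ^ (Fe r p ρ μ + (p - r) * μ)) * this
  · intro k x h1 h2
    rw [← pow_add τ μ (k+1), ← pow_add τ μ k, show μ+(k+1) = μ+k+1 from rfl]
    exact le_of_eq (Mbary_shift H μ k h1 h2).symm
  · rw [mul_zero, H.hM.1, mul_zero]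
  · intro k
    rw [← pow_add, Mgrid H, Mgrid H, ← Real.rpow_add H.hτ0]
    apply Real.rpow_le_rpow_of_exponent_ge H.hτ0 H.hτ1.le
    have := Fe_add_le' H.hρ H.hrp μ k
    linarith

lemma Fdeep (H : Hyp τ r p ρ M) (hnk1 : nk 1 = 1)
    (hmono : ∀ k : ℕ, 1 ≤ k → nk k < nk (k + 1))
    (hρ1 : ∀ i : ℕ, (∀ k : ℕ, 1 ≤ k → nk k ≠ i) → ρ i = 1)
    {J₀ k₁ m : ℕ} (hJ1 : 1 ≤ J₀)
    (hJ : ∀ j, J₀ ≤ j → nk j + (k₁ + 3) ≤ nk (j+1))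
    (hm : nk J₀ + 1 ≤ m) (hk₁ : 1 ≤ k₁) :
    p * (k₁:ℝ) - 2*p + r ≤ Fe r p ρ (m+k₁) - Fe r p ρ (m+1) := by
  have hw := Fe_win (r := r) (p := p) H.hρ (m+1) (k₁-1)
  rw [show (m+1)+(k₁-1) = m+k₁ by omega] at hw
  have hz := zc_deep hnk1 hmono hρ1 hJ1 hJ hm (ρ := ρ)
  have hzc : ((zc ρ (m+1) (m+k₁) : ℝ)) ≤ 1 := by exact_mod_cast hz
  have hcast : ((k₁ - 1 : ℕ) : ℝ) = (k₁:ℝ) - 1 := by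
    rw [Nat.cast_sub hk₁]; norm_num
  rw [hcast] at hw
  have hpr : 0 < p - r := by linarith [H.hrp]
  nlinarith [Nat.cast_nonneg (α := ℝ) (zc ρ (m+1) (m+k₁))]

end Stmt11

namespace Stmt11

variable {τ r p : ℝ} {ρ : ℕ → ℝ} {M : ℝ → ℝ} {nk : ℕ → ℕ}

lemma div_helper1 {A B C X : ℝ} (hC : 0 < C) (hX : 0 ≤ X) (h : A * C ≤ B) :
    A * X ≤ B * X / C := by
  rw [le_div_iff₀ hC]
  calc A * X * C = (A * C) * X := by ring
    _ ≤ B * X := mul_le_mul_of_nonneg_right h hX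

lemma div_helper2 {A B C X : ℝ} (hC : 0 < C) (hX : 0 ≤ X) (h : B ≤ A * C) :
    B * X / C ≤ A * X := by
  rw [div_le_iff₀ hC]
  calc B * X ≤ (A * C) * X := mul_le_mul_of_nonneg_right h hX
    _ = A * X * C := by ring

lemma lam_facts (H : Hyp τ r p ρ M) {lam : ℝ} {m : ℕ}
    (hm1 : τ^(m+1) < lam) (hm2 : lam ≤ τ^m) :
    0 < lam ∧ lam ≤ 1 ∧ 0 < M lam ∧ M lam ≤ τ ^ (Fe r p ρ m) ∧
      τ ^ (Fe r p ρ (m+1)) ≤ M lam := by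
  have h0 : 0 < lam := lt_trans (pow_pos H.hτ0 (m+1)) hm1
  have h1 : lam ≤ 1 := hm2.trans (pow_le_one₀ H.hτ0.le H.hτ1.le)
  refine ⟨h0, h1, M_pos H h0 h1, ?_, ?_⟩
  · rw [← Mgrid H]; exact M_mono H h0.le hm2 (pow_le_one₀ H.hτ0.le H.hτ1.le)
  · rw [← Mgrid H]
    exact M_mono H (pow_nonneg H.hτ0.le _) hm1.le h1

/-- universal lower bound `τ^p x^p ≤ f_lam x`. -/
lemma fL_lower (H : Hyp τ r p ρ M) {lam x : ℝ} {m : ℕ}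
    (hm1 : τ^(m+1) < lam) (hm2 : lam ≤ τ^m) (hx0 : 0 ≤ x) (hx1 : x ≤ 1) :
    τ ^ p * x ^ p ≤ M (lam * x) / M lam := by
  obtain ⟨hl0, hl1, hMl0, hMlu, hMll⟩ := lam_facts H hm1 hm2
  have hnum : M (τ^(m+1) * x) ≤ M (lam * x) :=
    M_mono H (mul_nonneg (pow_nonneg H.hτ0.le _) hx0)
      (mul_le_mul_of_nonneg_right hm1.le hx0)
      (mul_le_one₀ hl1 hx0 hx1)
  have hP1 := P1 H (m+1) x hx0 hx1
  have hd : τ ^ (Fe r p ρ (m+1)) * x ^ p / τ ^ (Fe r p ρ m) ≤ M (lam * x) / M lam :=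
    div_le_div₀
      (le_trans (mul_nonneg (Real.rpow_pos_of_pos H.hτ0 _).le (Real.rpow_nonneg hx0 p))
        (hP1.trans hnum)) (hP1.trans hnum) hMl0 hMlu
  refine le_trans (div_helper1 (Real.rpow_pos_of_pos H.hτ0 _) (Real.rpow_nonneg hx0 p) ?_) hd
  rw [← Real.rpow_add H.hτ0]
  apply Real.rpow_le_rpow_of_exponent_ge H.hτ0 H.hτ1.le
  have := Fe_succ_le H.hρ H.hrp m
  linarith

/-- universal upper bound `f_lam x ≤ τ^(r-2p) M x`. -/
lemma fL_upper (H : Hyp τ r p ρ M) (hnk1 : nk 1 = 1)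
    (hmono : ∀ k : ℕ, 1 ≤ k → nk k < nk (k + 1))
    (hgap : ∀ k : ℕ, 1 ≤ k → nk (k + 1) - nk k ≤ nk (k + 2) - nk (k + 1))
    (hρ0 : ∀ k : ℕ, 1 ≤ k → ρ (nk k) = 0)
    (hρ1 : ∀ i : ℕ, (∀ k : ℕ, 1 ≤ k → nk k ≠ i) → ρ i = 1)
    {lam x : ℝ} {m : ℕ}
    (hm1 : τ^(m+1) < lam) (hm2 : lam ≤ τ^m) (hx0 : 0 ≤ x) (hx1 : x ≤ 1) :
    M (lam * x) / M lam ≤ τ ^ (r - 2*p) * M x := by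
  obtain ⟨hl0, hl1, hMl0, hMlu, hMll⟩ := lam_facts H hm1 hm2
  have hnum : M (lam * x) ≤ M (τ^m * x) :=
    M_mono H (mul_nonneg hl0.le hx0)
      (mul_le_mul_of_nonneg_right hm2 hx0)
      (mul_le_one₀ (pow_le_one₀ H.hτ0.le H.hτ1.le) hx0 hx1)
  have hP2 := P2 H hnk1 hmono hgap hρ0 hρ1 m x hx0 hx1
  have hd : M (lam * x) / M lam ≤ τ ^ (Fe r p ρ m - (p - r)) * M x / τ ^ (Fe r p ρ (m+1)) :=
    div_le_div₀
      (mul_nonneg (Real.rpow_pos_of_pos H.hτ0 _).le (M_nonneg H hx0 hx1))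
      (hnum.trans hP2) (Real.rpow_pos_of_pos H.hτ0 _) hMll
  refine hd.trans (div_helper2 (Real.rpow_pos_of_pos H.hτ0 _) (M_nonneg H hx0 hx1) ?_)
  rw [← Real.rpow_add H.hτ0]
  apply Real.rpow_le_rpow_of_exponent_ge H.hτ0 H.hτ1.le
  have := Fe_succ_le H.hρ H.hrp m
  linarith

/-- shallow case: `f_lam` dominates a fixed multiple of `M`. -/
lemma fL_Mlower (H : Hyp τ r p ρ M) {lam x : ℝ} {m mstar : ℕ}
    (hm1 : τ^(m+1) < lam) (hm2 : lam ≤ τ^m) (hx0 : 0 ≤ x) (hx1 : x ≤ 1)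
    (hms : m ≤ mstar) :
    τ ^ (p + (p - r) * (mstar+1)) * M x ≤ M (lam * x) / M lam := by
  obtain ⟨hl0, hl1, hMl0, hMlu, hMll⟩ := lam_facts H hm1 hm2
  have hnum : M (τ^(m+1) * x) ≤ M (lam * x) :=
    M_mono H (mul_nonneg (pow_nonneg H.hτ0.le _) hx0)
      (mul_le_mul_of_nonneg_right hm1.le hx0)
      (mul_le_one₀ hl1 hx0 hx1)
  have hP3 := P3 H (m+1) x hx0 hx1
  have hd : τ ^ (Fe r p ρ (m+1) + (p - r) * (m+1:ℕ)) * M x / τ ^ (Fe r p ρ m)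
      ≤ M (lam * x) / M lam :=
    div_le_div₀
      (le_trans (mul_nonneg (Real.rpow_pos_of_pos H.hτ0 _).le (M_nonneg H hx0 hx1))
        (hP3.trans hnum)) (hP3.trans hnum) hMl0 hMlu
  refine le_trans (div_helper1 (Real.rpow_pos_of_pos H.hτ0 _) (M_nonneg H hx0 hx1) ?_) hd
  rw [← Real.rpow_add H.hτ0]
  apply Real.rpow_le_rpow_of_exponent_ge H.hτ0 H.hτ1.le
  have h1 := Fe_succ_le H.hρ H.hrp m
  have h2 : (p - r) * ((m:ℝ)+1) ≤ (p - r) * ((mstar:ℝ)+1) := by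
    have : (m:ℝ) ≤ mstar := Nat.cast_le.mpr hms
    nlinarith [H.hrp]
  push_cast
  push_cast at h2
  linarith

/-- deep case: `f_lam` is small at the reference point `x₁`. -/
lemma fL_deep (H : Hyp τ r p ρ M) (hnk1 : nk 1 = 1)
    (hmono : ∀ k : ℕ, 1 ≤ k → nk k < nk (k + 1))
    (hρ1 : ∀ i : ℕ, (∀ k : ℕ, 1 ≤ k → nk k ≠ i) → ρ i = 1)
    {J₀ k₁ m : ℕ} (hJ1 : 1 ≤ J₀)
    (hJ : ∀ j, J₀ ≤ j → nk j + (k₁ + 3) ≤ nk (j+1))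
    (hm : nk J₀ + 1 ≤ m)
    {lam x₁ : ℝ}
    (hm1 : τ^(m+1) < lam) (hm2 : lam ≤ τ^m)
    (hx₁l : τ^(k₁+1) < x₁) (hx₁u : x₁ ≤ τ^k₁) :
    M (lam * x₁) / M lam ≤ τ ^ (r - 3*p) * x₁ ^ p := by
  obtain ⟨hl0, hl1, hMl0, hMlu, hMll⟩ := lam_facts H hm1 hm2
  have hx₁0 : 0 < x₁ := lt_trans (pow_pos H.hτ0 _) hx₁l
  have hnum : M (lam * x₁) ≤ M (τ^(m+k₁)) := by
    rw [pow_add]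
    exact M_mono H (mul_nonneg hl0.le hx₁0.le)
      (mul_le_mul hm2 hx₁u hx₁0.le (pow_nonneg H.hτ0.le m))
      (mul_le_one₀ (pow_le_one₀ H.hτ0.le H.hτ1.le) (pow_nonneg H.hτ0.le k₁)
        (pow_le_one₀ H.hτ0.le H.hτ1.le))
  have hd : M (lam * x₁) / M lam ≤ τ ^ (Fe r p ρ (m+k₁)) / τ ^ (Fe r p ρ (m+1)) :=
    div_le_div₀ (Real.rpow_pos_of_pos H.hτ0 _).le (by rw [Mgrid H] at hnum; exact hnum)
      (Real.rpow_pos_of_pos H.hτ0 _) hMll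
  refine hd.trans ?_
  rw [← Real.rpow_sub H.hτ0]
  have hexp : p * (k₁:ℝ) - 2*p + r ≤ Fe r p ρ (m+k₁) - Fe r p ρ (m+1) := by
    rcases Nat.eq_zero_or_pos k₁ with h0 | h1
    · subst h0
      have := Fe_succ_le H.hρ H.hrp m
      simp only [Nat.add_zero, Nat.cast_zero]
      linarith [H.hrp]
    · exact Fdeep H hnk1 hmono hρ1 hJ1 hJ hm h1
  have h2 : τ ^ (Fe r p ρ (m+k₁) - Fe r p ρ (m+1)) ≤ τ ^ (p * (k₁:ℝ) - 2*p + r) :=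
    Real.rpow_le_rpow_of_exponent_ge H.hτ0 H.hτ1.le hexp
  refine h2.trans ?_
  have hx : τ ^ (p * ((k₁:ℝ)+1)) ≤ x₁ ^ p := by
    have h3 : ((τ:ℝ)^(k₁+1)) ^ p ≤ x₁ ^ p :=
      Real.rpow_le_rpow (pow_nonneg H.hτ0.le _) hx₁l.le (by linarith [H.p1])
    rw [← Real.rpow_natCast τ (k₁+1), ← Real.rpow_mul H.hτ0.le] at h3
    have hc : ((k₁+1 : ℕ):ℝ) * p = p * ((k₁:ℝ)+1) := by push_cast; ring
    rw [hc] at h3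
    exact h3
  calc τ ^ (p * (k₁:ℝ) - 2*p + r) = τ ^ (r - 3*p) * τ ^ (p * ((k₁:ℝ)+1)) := by
        rw [← Real.rpow_add H.hτ0]; congr 1; ring
    _ ≤ τ ^ (r - 3*p) * x₁ ^ p :=
        mul_le_mul_of_nonneg_left hx (Real.rpow_pos_of_pos H.hτ0 _).le

end Stmt11

/-- Lemma 3.8 (b), (c). Every `N ∈ C_{M,1}` is either equivalent to
`M` or satisfies `τ^{2p} t^p ≤ N t ≤ τ^{-3p} t^p` on `(0,1]`. -/
theorem statement11 (τ r p : ℝ) (hτ0 : 0 < τ) (hτ1 : τ < 1) (hr : 1 < r) (hrp : r < p)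
    (h1 : τ ^ (r - 1) * (1 - τ ^ p) ≤ 1 - τ ^ r)
    (h2 : τ ^ (p - 1) * (1 - τ ^ r) ≤ 1 - τ ^ p)
    (nk : ℕ → ℕ) (hnk1 : nk 1 = 1)
    (hmono : ∀ k : ℕ, 1 ≤ k → nk k < nk (k + 1))
    (hgap : ∀ k : ℕ, 1 ≤ k → nk (k + 1) - nk k ≤ nk (k + 2) - nk (k + 1))
    (hgap' : Filter.Tendsto (fun k => nk (k + 1) - nk k) Filter.atTop Filter.atTop)
    (ρ : ℕ → ℝ)
    (hρ0 : ∀ k : ℕ, 1 ≤ k → ρ (nk k) = 0)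
    (hρ1 : ∀ i : ℕ, (∀ k : ℕ, 1 ≤ k → nk k ≠ i) → ρ i = 1)
    (M : ℝ → ℝ) (hM : IsMeta τ r p ρ M) :
    ∀ N : C(Set.Icc (0 : ℝ) 1, ℝ),
      N ∈ closure (convexHull ℝ (closure
        {f : C(Set.Icc (0 : ℝ) 1, ℝ) | ∃ lam : ℝ, 0 < lam ∧ lam < 1 ∧
          ∀ t : Set.Icc (0 : ℝ) 1, f t = M (lam * (t : ℝ)) / M lam})) →
      (∃ C : ℝ, 1 ≤ C ∧ ∀ t : Set.Icc (0 : ℝ) 1, 0 < (t : ℝ) →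
          (1 / C) * M (t : ℝ) ≤ N t ∧ N t ≤ C * M (t : ℝ)) ∨
      (∀ t : Set.Icc (0 : ℝ) 1, 0 < (t : ℝ) →
          τ ^ (2 * p) * (t : ℝ) ^ p ≤ N t ∧ N t ≤ τ ^ (-(3 * p)) * (t : ℝ) ^ p) := by
  intro N hN
  have hρ01 : ∀ n, 1 ≤ n → ρ n = 0 ∨ ρ n = 1 := by
    intro n hn
    by_cases h : ∃ k, 1 ≤ k ∧ nk k = n
    · obtain ⟨k, hk, rfl⟩ := h
      exact Or.inl (hρ0 k hk)
    · push_neg at h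
      exact Or.inr (hρ1 n (fun k hk => h k hk))
  have H : Stmt11.Hyp τ r p ρ M := ⟨hτ0, hτ1, hr, hrp, hρ01, hM⟩
  -- the closed convex set trick
  have key : ∀ T : Set C(Set.Icc (0 : ℝ) 1, ℝ), IsClosed T → Convex ℝ T →
      ({f : C(Set.Icc (0 : ℝ) 1, ℝ) | ∃ lam : ℝ, 0 < lam ∧ lam < 1 ∧
        ∀ t : Set.Icc (0 : ℝ) 1, f t = M (lam * (t : ℝ)) / M lam} ⊆ T) → N ∈ T := by
    intro T hc hcv hsub
    exact closure_minimal (convexHull_min (closure_minimal hsub hc) hcv) hc hN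
  -- universal lower bound
  have hLower : ∀ t : Set.Icc (0 : ℝ) 1, τ ^ p * (t : ℝ) ^ p ≤ N t := by
    apply key
    · have heq : {g : C(Set.Icc (0 : ℝ) 1, ℝ) | ∀ t : Set.Icc (0 : ℝ) 1,
          τ ^ p * (t : ℝ) ^ p ≤ g t} =
          ⋂ t : Set.Icc (0 : ℝ) 1, {g : C(Set.Icc (0 : ℝ) 1, ℝ) | τ ^ p * (t : ℝ) ^ p ≤ g t} := by
        ext g; simp [Set.mem_iInter]
      have hcl : IsClosed {g : C(Set.Icc (0 : ℝ) 1, ℝ) | ∀ t : Set.Icc (0 : ℝ) 1,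
          τ ^ p * (t : ℝ) ^ p ≤ g t} := by
        rw [heq]
        exact isClosed_iInter fun t =>
          isClosed_le continuous_const (continuous_eval_const t)
      exact hcl
    · intro g hg h hh a b ha hb hab
      intro t
      have h1 := mul_le_mul_of_nonneg_left (hg t) ha
      have h2 := mul_le_mul_of_nonneg_left (hh t) hb
      show τ ^ p * (t : ℝ) ^ p ≤ (a • g + b • h) t
      rw [ContinuousMap.add_apply, ContinuousMap.smul_apply, ContinuousMap.smul_apply,
        smul_eq_mul, smul_eq_mul]
      have h3 : a * (τ ^ p * (t : ℝ) ^ p) + b * (τ ^ p * (t : ℝ) ^ p)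
          = τ ^ p * (t : ℝ) ^ p := by linear_combination (τ ^ p * (t : ℝ) ^ p) * hab
      linarith
    · rintro f ⟨lam, hl0, hl1, hfe⟩ t
      obtain ⟨m, hm1, hm2⟩ := Stmt11.Kex H hl0 hl1.le
      rw [hfe t]
      exact Stmt11.fL_lower H hm1 hm2 t.2.1 t.2.2
  -- universal upper bound
  have hUpper : ∀ t : Set.Icc (0 : ℝ) 1, N t ≤ τ ^ (r - 2*p) * M (t : ℝ) := by
    apply key
    · have heq : {g : C(Set.Icc (0 : ℝ) 1, ℝ) | ∀ t : Set.Icc (0 : ℝ) 1,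
          g t ≤ τ ^ (r - 2*p) * M (t : ℝ)} =
          ⋂ t : Set.Icc (0 : ℝ) 1,
            {g : C(Set.Icc (0 : ℝ) 1, ℝ) | g t ≤ τ ^ (r - 2*p) * M (t : ℝ)} := by
        ext g; simp [Set.mem_iInter]
      have hcl : IsClosed {g : C(Set.Icc (0 : ℝ) 1, ℝ) | ∀ t : Set.Icc (0 : ℝ) 1,
          g t ≤ τ ^ (r - 2*p) * M (t : ℝ)} := by
        rw [heq]
        exact isClosed_iInter fun t =>
          isClosed_le (continuous_eval_const t) continuous_const
      exact hcl
    · intro g hg h hh a b ha hb hab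
      intro t
      have h1 := mul_le_mul_of_nonneg_left (hg t) ha
      have h2 := mul_le_mul_of_nonneg_left (hh t) hb
      show (a • g + b • h) t ≤ τ ^ (r - 2*p) * M (t : ℝ)
      rw [ContinuousMap.add_apply, ContinuousMap.smul_apply, ContinuousMap.smul_apply,
        smul_eq_mul, smul_eq_mul]
      have h3 : a * (τ ^ (r - 2*p) * M (t : ℝ)) + b * (τ ^ (r - 2*p) * M (t : ℝ))
          = τ ^ (r - 2*p) * M (t : ℝ) := by
        linear_combination (τ ^ (r - 2*p) * M (t : ℝ)) * hab
      linarith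
    · rintro f ⟨lam, hl0, hl1, hfe⟩ t
      obtain ⟨m, hm1, hm2⟩ := Stmt11.Kex H hl0 hl1.le
      rw [hfe t]
      exact Stmt11.fL_upper H hnk1 hmono hgap hρ0 hρ1 hm1 hm2 t.2.1 t.2.2
  by_cases hcase : ∀ t : Set.Icc (0 : ℝ) 1, 0 < (t : ℝ) →
      N t ≤ τ ^ (-(3 * p)) * (t : ℝ) ^ p
  · right
    intro t ht
    refine ⟨?_, hcase t ht⟩
    calc τ ^ (2 * p) * (t : ℝ) ^ p
        ≤ τ ^ p * (t : ℝ) ^ p := by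
          apply mul_le_mul_of_nonneg_right _ (Real.rpow_nonneg t.2.1 p)
          apply Real.rpow_le_rpow_of_exponent_ge hτ0 hτ1.le
          nlinarith [hr.trans hrp]
      _ ≤ N t := hLower t
  · left
    push_neg at hcase
    obtain ⟨t₁, ht₁pos, hbig⟩ := hcase
    obtain ⟨k₁, hk₁1, hk₁2⟩ := Stmt11.Kex H ht₁pos t₁.2.2
    obtain ⟨J, hJ⟩ := Filter.eventually_atTop.mp (hgap'.eventually_ge_atTop (k₁+3))
    have hJ1 : 1 ≤ max J 1 := le_max_right _ _
    have hJd : ∀ j, max J 1 ≤ j → nk j + (k₁+3) ≤ nk (j+1) := by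
      intro j hj
      have ha := hJ j (le_trans (le_max_left _ _) hj)
      have hb := (hmono j (le_trans (le_max_right _ _) hj)).le
      omega
    set J₀ := max J 1 with hJ₀def
    set mstar := nk J₀ with hmstardef
    set θ := τ ^ (r - 3*p) * (t₁ : ℝ) ^ p with hθdef
    set cst := τ ^ (p + (p - r) * (mstar+1)) with hcstdef
    set D := τ ^ (r - 2*p) * M (t₁ : ℝ) with hDdef
    have hθ0 : 0 ≤ θ :=
      mul_nonneg (Real.rpow_nonneg hτ0.le _) (Real.rpow_nonneg t₁.2.1 p)
    have hcst0 : 0 < cst := Real.rpow_pos_of_pos hτ0 _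
    have hD0 : 0 < D :=
      mul_pos (Real.rpow_pos_of_pos hτ0 _) (Stmt11.M_pos H ht₁pos t₁.2.2)
    have hT3 : ∀ t : Set.Icc (0 : ℝ) 1, (N t₁ - θ) * (cst * M (t : ℝ)) ≤ D * N t := by
      apply key
      · have heq : {g : C(Set.Icc (0 : ℝ) 1, ℝ) | ∀ t : Set.Icc (0 : ℝ) 1,
            (g t₁ - θ) * (cst * M (t : ℝ)) ≤ D * g t} =
            ⋂ t : Set.Icc (0 : ℝ) 1, {g : C(Set.Icc (0 : ℝ) 1, ℝ) |
              (g t₁ - θ) * (cst * M (t : ℝ)) ≤ D * g t} := by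
          ext g; simp [Set.mem_iInter]
        have hcl : IsClosed {g : C(Set.Icc (0 : ℝ) 1, ℝ) | ∀ t : Set.Icc (0 : ℝ) 1,
            (g t₁ - θ) * (cst * M (t : ℝ)) ≤ D * g t} := by
          rw [heq]
          refine isClosed_iInter fun t => isClosed_le ?_ ?_
          · exact (((continuous_eval_const t₁).sub continuous_const).mul
              continuous_const)
          · exact continuous_const.mul (continuous_eval_const t)
        exact hcl
      · intro g hg h hh a b ha hb hab
        intro t
        have h1 := mul_le_mul_of_nonneg_left (hg t) ha
        have h2 := mul_le_mul_of_nonneg_left (hh t) hb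
        show ((a • g + b • h) t₁ - θ) * (cst * M (t : ℝ)) ≤ D * (a • g + b • h) t
        rw [ContinuousMap.add_apply, ContinuousMap.smul_apply, ContinuousMap.smul_apply,
          smul_eq_mul, smul_eq_mul, ContinuousMap.add_apply, ContinuousMap.smul_apply,
          ContinuousMap.smul_apply, smul_eq_mul, smul_eq_mul]
        have h3 : (a * g t₁ + b * h t₁ - θ) * (cst * M (t : ℝ))
            = a * ((g t₁ - θ) * (cst * M (t : ℝ)))
              + b * ((h t₁ - θ) * (cst * M (t : ℝ))) := by
          linear_combination (θ * (cst * M (t : ℝ))) * hab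
        linarith
      · rintro f ⟨lam, hl0, hl1, hfe⟩ t
        obtain ⟨m, hm1, hm2⟩ := Stmt11.Kex H hl0 hl1.le
        have hMt0 : 0 ≤ M (t : ℝ) := Stmt11.M_nonneg H t.2.1 t.2.2
        have hft0 : (0:ℝ) ≤ f t := by
          rw [hfe t]
          exact div_nonneg (Stmt11.M_nonneg H (mul_nonneg hl0.le t.2.1)
            (mul_le_one₀ hl1.le t.2.1 t.2.2)) (Stmt11.M_pos H hl0 hl1.le).le
        show (f t₁ - θ) * (cst * M (t : ℝ)) ≤ D * f t
        rcases le_or_gt m mstar with hms | hms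
        · -- shallow: f dominates cst * M
          have hMl : cst * M (t : ℝ) ≤ f t := by
            rw [hfe t]
            exact Stmt11.fL_Mlower H hm1 hm2 t.2.1 t.2.2 hms
          have hfub : f t₁ ≤ D := by
            rw [hfe t₁]
            exact Stmt11.fL_upper H hnk1 hmono hgap hρ0 hρ1 hm1 hm2 t₁.2.1 t₁.2.2
          have hint1 : (f t₁ - θ) * (cst * M (t : ℝ)) ≤ D * (cst * M (t : ℝ)) :=
            mul_le_mul_of_nonneg_right (by linarith) (mul_nonneg hcst0.le hMt0)
          have hint2 : D * (cst * M (t : ℝ)) ≤ D * f t :=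
            mul_le_mul_of_nonneg_left hMl hD0.le
          linarith
        · -- deep: f is small at t₁
          have hdeep : f t₁ ≤ θ := by
            rw [hfe t₁]
            exact Stmt11.fL_deep H hnk1 hmono hρ1 hJ1 hJd (by omega) hm1 hm2 hk₁1 hk₁2
          have : (f t₁ - θ) * (cst * M (t : ℝ)) ≤ 0 :=
            mul_nonpos_of_nonpos_of_nonneg (by linarith) (mul_nonneg hcst0.le hMt0)
          have : (0:ℝ) ≤ D * f t := mul_nonneg hD0.le hft0
          linarith
    -- conclude equivalence with M
    have hθlt : θ < τ ^ (-(3*p)) * (t₁ : ℝ) ^ p := by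
      apply mul_lt_mul_of_pos_right _ (Real.rpow_pos_of_pos ht₁pos p)
      exact Real.rpow_lt_rpow_of_exponent_gt hτ0 hτ1 (by linarith)
    have hε : 0 < N t₁ - θ := by linarith
    set c := (N t₁ - θ) * cst / D with hcdef
    have hc0 : 0 < c := div_pos (mul_pos hε hcst0) hD0
    have hNM : ∀ t : Set.Icc (0 : ℝ) 1, c * M (t : ℝ) ≤ N t := by
      intro t
      have h3 := hT3 t
      have heq : c * M (t : ℝ) = ((N t₁ - θ) * (cst * M (t : ℝ))) / D := by
        rw [hcdef]; field_simp
      rw [heq, div_le_iff₀ hD0]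
      linarith
    refine ⟨max (max (1/c) (τ ^ (r - 2*p))) 1, le_max_right _ _, ?_⟩
    intro t ht
    have hC0 : (0:ℝ) < max (max (1/c) (τ ^ (r - 2*p))) 1 :=
      lt_of_lt_of_le one_pos (le_max_right _ _)
    have hMt0 : 0 ≤ M (t : ℝ) := Stmt11.M_nonneg H t.2.1 t.2.2
    constructor
    · have h1C : 1 / max (max (1/c) (τ ^ (r - 2*p))) 1 ≤ c := by
        rw [div_le_iff₀ hC0]
        have h2 : 1/c ≤ max (max (1/c) (τ ^ (r - 2*p))) 1 :=
          le_trans (le_max_left _ _) (le_max_left _ _)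
        calc (1:ℝ) = c * (1/c) := by field_simp
          _ ≤ c * max (max (1/c) (τ ^ (r - 2*p))) 1 :=
            mul_le_mul_of_nonneg_left h2 hc0.le
      calc 1 / max (max (1/c) (τ ^ (r - 2*p))) 1 * M (t : ℝ)
          ≤ c * M (t : ℝ) := mul_le_mul_of_nonneg_right h1C hMt0
        _ ≤ N t := hNM t
    · calc N t ≤ τ ^ (r - 2*p) * M (t : ℝ) := hUpper t
        _ ≤ max (max (1/c) (τ ^ (r - 2*p))) 1 * M (t : ℝ) :=
          mul_le_mul_of_nonneg_right
            (le_trans (le_max_right _ _) (le_max_left _ _)) hMt0
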